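/- Let G be a P4+kP1-free graph (for some k ≥ 1) that contains an induced path v_1-v_2-v_3-v_4 on 4 vertices. Let R = V(G) \ (N[v_1] ∪ N[v_2] ∪ N[v_3] ∪ N[v_4]) and let S be a maximal stable set in G|R. Then |S| ≤ k−1, and consequently {v_1,v_2,v_3,v_4} ∪ S is a dominating set of G of size at most k+3. -/

import Mathlib

/-- `P4 + kP1`: a path on four vertices together with `k` isolated vertices. -/
def P4kP1 (k : ℕ) : SimpleGraph (Fin (4 + k)) :=
  SimpleGraph.fromRel (fun a b => a.val + 1 = b.val ∧ b.val < 4)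


private lemma aux_inj {V : Type*} (v₁ v₂ v₃ v₄ : V)
    (d12 : v₁ ≠ v₂) (d13 : v₁ ≠ v₃) (d14 : v₁ ≠ v₄)
    (d23 : v₂ ≠ v₃) (d24 : v₂ ≠ v₄) (d34 : v₃ ≠ v₄) :
    Function.Injective ![v₁, v₂, v₃, v₄] := by
  intro i j h
  fin_cases i <;> fin_cases j <;> simp_all

private lemma aux_adj {V : Type*} (G : SimpleGraph V) (v₁ v₂ v₃ v₄ : V)
    (h12 : G.Adj v₁ v₂) (h23 : G.Adj v₂ v₃) (h34 : G.Adj v₃ v₄)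
    (h13 : ¬ G.Adj v₁ v₃) (h14 : ¬ G.Adj v₁ v₄) (h24 : ¬ G.Adj v₂ v₄) :
    ∀ i j : Fin 4, G.Adj (![v₁, v₂, v₃, v₄] i) (![v₁, v₂, v₃, v₄] j) ↔
      (i.val + 1 = j.val ∨ j.val + 1 = i.val) := by
  have h21 := h12.symm
  have h32 := h23.symm
  have h43 := h34.symm
  have h31 : ¬ G.Adj v₃ v₁ := fun h => h13 h.symm
  have h41 : ¬ G.Adj v₄ v₁ := fun h => h14 h.symm
  have h42 : ¬ G.Adj v₄ v₂ := fun h => h24 h.symm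
  intro i j
  fin_cases i <;> fin_cases j <;> simp_all [SimpleGraph.irrefl]

theorem stmt_14 {V : Type*} [Fintype V] (G : SimpleGraph V) (k : ℕ) (hk : 1 ≤ k)
    (hfree : ¬ Nonempty (P4kP1 k ↪g G))
    (v₁ v₂ v₃ v₄ : V)
    (hdist : [v₁, v₂, v₃, v₄].Pairwise (· ≠ ·))
    (h12 : G.Adj v₁ v₂) (h23 : G.Adj v₂ v₃) (h34 : G.Adj v₃ v₄)
    (h13 : ¬ G.Adj v₁ v₃) (h14 : ¬ G.Adj v₁ v₄) (h24 : ¬ G.Adj v₂ v₄)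
    (R : Set V) (hR : R = {w | ∀ u ∈ ({v₁, v₂, v₃, v₄} : Set V), w ≠ u ∧ ¬ G.Adj u w})
    (S : Set V) (hSR : S ⊆ R)
    (hstable : ∀ a ∈ S, ∀ b ∈ S, ¬ G.Adj a b)
    (hmax : ∀ w ∈ R, w ∉ S → ∃ s ∈ S, G.Adj w s) :
    S.ncard ≤ k - 1 ∧
    (∀ w ∉ ({v₁, v₂, v₃, v₄} : Set V) ∪ S, ∃ d ∈ ({v₁, v₂, v₃, v₄} : Set V) ∪ S, G.Adj w d) ∧
    (({v₁, v₂, v₃, v₄} : Set V) ∪ S).ncard ≤ k + 3 := by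
  simp only [List.pairwise_cons, List.mem_cons, List.not_mem_nil] at hdist
  obtain ⟨H1, H2, H3, -⟩ := hdist
  have d12 : v₁ ≠ v₂ := H1 v₂ (by tauto)
  have d13 : v₁ ≠ v₃ := H1 v₃ (by tauto)
  have d14 : v₁ ≠ v₄ := H1 v₄ (by tauto)
  have d23 : v₂ ≠ v₃ := H2 v₃ (by tauto)
  have d24 : v₂ ≠ v₄ := H2 v₄ (by tauto)
  have d34 : v₃ ≠ v₄ := H3 v₄ (by tauto)
  -- facts about S
  have hSfacts : ∀ s ∈ S, (s ≠ v₁ ∧ s ≠ v₂ ∧ s ≠ v₃ ∧ s ≠ v₄) ∧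
      (¬ G.Adj s v₁ ∧ ¬ G.Adj s v₂ ∧ ¬ G.Adj s v₃ ∧ ¬ G.Adj s v₄) := by
    intro s hs
    have := hSR hs
    rw [hR] at this
    have h1 := this v₁ (by simp)
    have h2 := this v₂ (by simp)
    have h3 := this v₃ (by simp)
    have h4 := this v₄ (by simp)
    exact ⟨⟨h1.1, h2.1, h3.1, h4.1⟩,
      fun h => h1.2 h.symm, fun h => h2.2 h.symm, fun h => h3.2 h.symm,
      fun h => h4.2 h.symm⟩
  have hScard : S.ncard ≤ k - 1 := by
    by_contra hc
    push_neg at hc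
    have hkS : k ≤ S.ncard := by omega
    obtain ⟨t, hts, htc⟩ := Set.exists_subset_card_eq hkS
    have htfin : t.Finite := Set.toFinite t
    set F := htfin.toFinset with hF
    have hFc : F.card = k := by
      rw [hF, ← Set.ncard_eq_toFinset_card _ htfin]; exact htc
    set e : Fin k → V := fun i => (F.equivFin.symm (Fin.cast hFc.symm i)).val with he
    have heS : ∀ i, e i ∈ S := by
      intro i
      have : (F.equivFin.symm (Fin.cast hFc.symm i)).val ∈ F :=
        (F.equivFin.symm (Fin.cast hFc.symm i)).2
      exact hts (htfin.mem_toFinset.mp this)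
    have heInj : Function.Injective e := by
      intro i j hij
      simp only [he] at hij
      have := F.equivFin.symm.injective (Subtype.ext hij)
      simpa [Fin.ext_iff] using congrArg Fin.val this
    set nv : Fin 4 → V := ![v₁, v₂, v₃, v₄] with hnv
    have hnvInj : Function.Injective nv := aux_inj v₁ v₂ v₃ v₄ d12 d13 d14 d23 d24 d34
    have hnvAdj := aux_adj G v₁ v₂ v₃ v₄ h12 h23 h34 h13 h14 h24
    have hne : ∀ (i : Fin 4) (j : Fin k), nv i ≠ e j := by
      intro i j h
      obtain ⟨e1, e2, e3, e4⟩ := (hSfacts _ (heS j)).1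
      fin_cases i <;> simp only [hnv, Matrix.cons_val_zero, Matrix.cons_val_one,
        Matrix.head_cons, Matrix.cons_val_two, Matrix.tail_cons, Matrix.cons_val_three,
        Matrix.head_fin_const, Fin.isValue] at h <;>
        [exact e1 h.symm; exact e2 h.symm; exact e3 h.symm; exact e4 h.symm]
    have hnadj : ∀ (i : Fin 4) (j : Fin k), ¬ G.Adj (nv i) (e j) := by
      intro i j h
      obtain ⟨e1, e2, e3, e4⟩ := (hSfacts _ (heS j)).2
      fin_cases i <;> simp only [hnv, Matrix.cons_val_zero, Matrix.cons_val_one,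
        Matrix.head_cons, Matrix.cons_val_two, Matrix.tail_cons, Matrix.cons_val_three,
        Matrix.head_fin_const, Fin.isValue] at h <;>
        [exact e1 h.symm; exact e2 h.symm; exact e3 h.symm; exact e4 h.symm]
    refine hfree ⟨?_⟩
    refine ⟨⟨fun i => if h : i.val < 4 then nv ⟨i.val, h⟩ else e ⟨i.val - 4, by omega⟩, ?_⟩, ?_⟩
    · intro a b hab
      simp only at hab
      by_cases ha : a.val < 4 <;> by_cases hb : b.val < 4
      · rw [dif_pos ha, dif_pos hb] at hab
        have := hnvInj hab
        have := congrArg Fin.val this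
        exact Fin.ext (by simpa using this)
      · rw [dif_pos ha, dif_neg hb] at hab
        exact absurd hab (hne _ _)
      · rw [dif_neg ha, dif_pos hb] at hab
        exact absurd hab.symm (hne _ _)
      · rw [dif_neg ha, dif_neg hb] at hab
        have := heInj hab
        have := congrArg Fin.val this
        simp at this
        exact Fin.ext (by omega)
    · intro a b
      show G.Adj (if h : a.val < 4 then nv ⟨a.val, h⟩ else e ⟨a.val - 4, by omega⟩)
        (if h : b.val < 4 then nv ⟨b.val, h⟩ else e ⟨b.val - 4, by omega⟩) ↔ _
      rw [show (P4kP1 k).Adj a b ↔ a ≠ b ∧ ((a.val + 1 = b.val ∧ b.val < 4) ∨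
          (b.val + 1 = a.val ∧ a.val < 4)) from by
        simp [P4kP1, SimpleGraph.fromRel_adj]]
      by_cases ha : a.val < 4 <;> by_cases hb : b.val < 4
      · rw [dif_pos ha, dif_pos hb, hnvAdj ⟨a.val, ha⟩ ⟨b.val, hb⟩]
        simp only [Fin.ext_iff, ne_eq, Fin.val_mk]
        omega
      · rw [dif_pos ha, dif_neg hb]
        constructor
        · intro h; exact absurd h (hnadj _ _)
        · rintro ⟨-, ⟨h1, h2⟩ | ⟨h1, h2⟩⟩ <;> omega
      · rw [dif_neg ha, dif_pos hb]
        constructor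
        · intro h; exact absurd h.symm (hnadj _ _)
        · rintro ⟨-, ⟨h1, h2⟩ | ⟨h1, h2⟩⟩ <;> omega
      · rw [dif_neg ha, dif_neg hb]
        constructor
        · intro h
          exact absurd h (hstable _ (heS _) _ (heS _))
        · rintro ⟨-, ⟨h1, h2⟩ | ⟨h1, h2⟩⟩ <;> omega
  refine ⟨hScard, ?_, ?_⟩
  · intro w hw
    simp only [Set.mem_union, Set.mem_insert_iff, Set.mem_singleton_iff, not_or] at hw
    by_cases hwR : w ∈ R
    · obtain ⟨s, hs, hadj⟩ := hmax w hwR (by tauto)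
      exact ⟨s, Or.inr hs, hadj⟩
    · rw [hR] at hwR
      simp only [Set.mem_setOf_eq] at hwR
      push_neg at hwR
      obtain ⟨u, hu, hu2⟩ := hwR
      simp only [Set.mem_insert_iff, Set.mem_singleton_iff] at hu
      have hwu : w ≠ u := by rcases hu with h|h|h|h <;> subst h <;> tauto
      have : G.Adj u w := hu2 hwu
      exact ⟨u, Or.inl (by simpa [Set.mem_insert_iff] using hu), this.symm⟩
  · have h1 : (({v₁, v₂, v₃, v₄} : Set V) ∪ S).ncard ≤
        ({v₁, v₂, v₃, v₄} : Set V).ncard + S.ncard := Set.ncard_union_le _ _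
    have h2 : ({v₁, v₂, v₃, v₄} : Set V).ncard ≤ 4 := by
      apply le_trans (Set.ncard_insert_le _ _)
      have := Set.ncard_insert_le v₂ ({v₃, v₄} : Set V)
      have := Set.ncard_insert_le v₃ ({v₄} : Set V)
      simp [Set.ncard_singleton] at *
      omega
    omega
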